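/- Let G = (V, E) be a finite undirected graph with incidence weights β̃_{v,e} = 1 if edge e is incident to vertex v and β̃_{v,e} = 0 otherwise. Suppose there exists a blocking decision x ∈ {0,1}^{V×E} with Σ_{v∈V} x_{v,e} ≤ 1 for every e ∈ E such that max{ Σ_{v,e} β̃_{v,e} y_{v,e} : y ∈ {0,1}^{V×E}, y ≤ 1 − x, Σ_{e∈E} y_{v,e} ≤ 1 for every v ∈ V } ≤ |V| − q for some integer q ≥ 0. Then G contains an independent set S ⊆ V (no two vertices of S joined by an edge of E) with |S| ≥ q. -/
import Mathlib


/-- If there is a feasible leader blocking decision `x` for which the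
follower's optimal value is at most `|V| - q`, then `G` has an independent set of
size at least `q`. -/
theorem pmi_to_mis {V : Type*} [Fintype V] [DecidableEq V]
    (G : SimpleGraph V) [DecidableRel G.Adj] (q : ℕ)
    (x : V → Sym2 V → ℝ)
    (hxbin : ∀ v e, x v e = 0 ∨ x v e = 1)
    (hxfeas : ∀ e ∈ G.edgeFinset, ∑ v : V, x v e ≤ 1)
    (hmax : sSup {w : ℝ | ∃ y : V → Sym2 V → ℝ,
        (∀ v e, y v e = 0 ∨ y v e = 1) ∧
        (∀ v e, y v e ≤ 1 - x v e) ∧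
        (∀ v : V, ∑ e ∈ G.edgeFinset, y v e ≤ 1) ∧
        w = ∑ v : V, ∑ e ∈ G.edgeFinset, (if v ∈ e then (1 : ℝ) else 0) * y v e}
      ≤ (Fintype.card V : ℝ) - q) :
    ∃ S : Finset V, (∀ v ∈ S, ∀ w ∈ S, ¬ G.Adj v w) ∧ q ≤ S.card := by
  classical
  set P : V → Prop := fun v => ∀ e ∈ G.edgeFinset, v ∈ e → x v e = 1 with hP
  set S : Finset V := Finset.univ.filter P with hSdef
  set T : Finset V := Finset.univ.filter (fun v => ¬ P v) with hTdef
  have hxnn : ∀ v e, (0:ℝ) ≤ x v e := by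
    intro v e; rcases hxbin v e with h | h <;> rw [h] <;> norm_num
  have hxle1 : ∀ v e, x v e ≤ 1 := by
    intro v e; rcases hxbin v e with h | h <;> rw [h] <;> norm_num
  refine ⟨S, ?_, ?_⟩
  · intro v hv w hw hadj
    have hv' : P v := (Finset.mem_filter.mp hv).2
    have hw' : P w := (Finset.mem_filter.mp hw).2
    have he : s(v, w) ∈ G.edgeFinset := by
      rw [SimpleGraph.mem_edgeFinset]; exact hadj
    have h1 : x v s(v, w) = 1 := hv' _ he (by simp)
    have h2 : x w s(v, w) = 1 := hw' _ he (by simp)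
    have hne : v ≠ w := hadj.ne
    have hpair : ∑ u ∈ ({v, w} : Finset V), x u s(v, w) = 2 := by
      rw [Finset.sum_pair hne, h1, h2]; norm_num
    have hmono : ∑ u ∈ ({v, w} : Finset V), x u s(v, w) ≤ ∑ u : V, x u s(v, w) :=
      Finset.sum_le_sum_of_subset_of_nonneg (Finset.subset_univ _)
        (fun u _ _ => hxnn u _)
    have := hxfeas _ he
    linarith
  · -- construct the follower solution scoring |T|
    have hch : ∀ v ∈ T, ∃ e, e ∈ G.edgeFinset ∧ v ∈ e ∧ x v e = 0 := by
      intro v hv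
      have hv' : ¬ P v := (Finset.mem_filter.mp hv).2
      have hv2 : ¬ ∀ e ∈ G.edgeFinset, v ∈ e → x v e = 1 := hv'
      push_neg at hv2
      obtain ⟨e, he, hve, hxne⟩ := hv2
      exact ⟨e, he, hve, (hxbin v e).resolve_right hxne⟩
    set g : V → Sym2 V := fun v =>
      if h : ∃ e, e ∈ G.edgeFinset ∧ v ∈ e ∧ x v e = 0 then h.choose else s(v, v) with hgdef
    have hg : ∀ v ∈ T, g v ∈ G.edgeFinset ∧ v ∈ g v ∧ x v (g v) = 0 := by
      intro v hv
      have h := hch v hv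
      simp only [hgdef, dif_pos h]
      exact h.choose_spec
    set y : V → Sym2 V → ℝ := fun v e => if v ∈ T ∧ e = g v then 1 else 0 with hydef
    have hybin : ∀ v e, y v e = 0 ∨ y v e = 1 := by
      intro v e; by_cases h : v ∈ T ∧ e = g v <;> simp [hydef, h]
    have hynn : ∀ v e, (0:ℝ) ≤ y v e := by
      intro v e; rcases hybin v e with h | h <;> rw [h] <;> norm_num
    have hyfeas : ∀ v e, y v e ≤ 1 - x v e := by
      intro v e
      by_cases h : v ∈ T ∧ e = g v
      · have := (hg v h.1).2.2
        rw [h.2]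
        simp [hydef, h, this]
      · simp only [hydef, if_neg h]
        linarith [hxle1 v e]
    have hinner : ∀ v : V, ∑ e ∈ G.edgeFinset, (if v ∈ e then (1:ℝ) else 0) * y v e
        = if v ∈ T then 1 else 0 := by
      intro v
      by_cases hv : v ∈ T
      · obtain ⟨hge, hvg, hxg⟩ := hg v hv
        rw [if_pos hv, Finset.sum_eq_single (g v)]
        · simp [hydef, hv, hvg]
        · intro e _ hne; simp [hydef, hne]
        · intro h; exact absurd hge h
      · rw [if_neg hv]
        apply Finset.sum_eq_zero
        intro e _; simp [hydef, hv]
    have hrow : ∀ v : V, ∑ e ∈ G.edgeFinset, y v e ≤ 1 := by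
      intro v
      by_cases hv : v ∈ T
      · obtain ⟨hge, hvg, hxg⟩ := hg v hv
        rw [Finset.sum_eq_single (g v)]
        · simp [hydef, hv]
        · intro e _ hne; simp [hydef, hne]
        · intro h; exact absurd hge h
      · have : ∑ e ∈ G.edgeFinset, y v e = 0 :=
          Finset.sum_eq_zero (fun e _ => by simp [hydef, hv])
        rw [this]; norm_num
    have hval : ∑ v : V, ∑ e ∈ G.edgeFinset, (if v ∈ e then (1:ℝ) else 0) * y v e
        = (T.card : ℝ) := by
      simp only [hinner]
      rw [Finset.sum_ite_mem, Finset.univ_inter, Finset.sum_const, nsmul_eq_mul, mul_one]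
    have hmem : (T.card : ℝ) ∈ {w : ℝ | ∃ y : V → Sym2 V → ℝ,
        (∀ v e, y v e = 0 ∨ y v e = 1) ∧
        (∀ v e, y v e ≤ 1 - x v e) ∧
        (∀ v : V, ∑ e ∈ G.edgeFinset, y v e ≤ 1) ∧
        w = ∑ v : V, ∑ e ∈ G.edgeFinset, (if v ∈ e then (1 : ℝ) else 0) * y v e} :=
      ⟨y, hybin, hyfeas, hrow, hval.symm⟩
    have hbdd : BddAbove {w : ℝ | ∃ y : V → Sym2 V → ℝ,
        (∀ v e, y v e = 0 ∨ y v e = 1) ∧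
        (∀ v e, y v e ≤ 1 - x v e) ∧
        (∀ v : V, ∑ e ∈ G.edgeFinset, y v e ≤ 1) ∧
        w = ∑ v : V, ∑ e ∈ G.edgeFinset, (if v ∈ e then (1 : ℝ) else 0) * y v e} := by
      refine ⟨(Fintype.card V : ℝ), ?_⟩
      rintro w ⟨z, hzbin, _, hzrow, rfl⟩
      have hznn : ∀ v e, (0:ℝ) ≤ z v e := by
        intro v e; rcases hzbin v e with h | h <;> rw [h] <;> norm_num
      calc ∑ v : V, ∑ e ∈ G.edgeFinset, (if v ∈ e then (1:ℝ) else 0) * z v e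
          ≤ ∑ v : V, (1:ℝ) := by
            apply Finset.sum_le_sum
            intro v _
            calc ∑ e ∈ G.edgeFinset, (if v ∈ e then (1:ℝ) else 0) * z v e
                ≤ ∑ e ∈ G.edgeFinset, z v e := by
                  apply Finset.sum_le_sum
                  intro e _
                  by_cases h : v ∈ e <;> simp [h, hznn v e]
              _ ≤ 1 := hzrow v
        _ = (Fintype.card V : ℝ) := by simp
    have hle : (T.card : ℝ) ≤ (Fintype.card V : ℝ) - q :=
      le_trans (le_csSup hbdd hmem) hmax
    have hcard : S.card + T.card = Fintype.card V := by
      rw [hSdef, hTdef]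
      rw [Finset.card_filter_add_card_filter_not]
      exact Finset.card_univ
    have : (q : ℝ) ≤ (S.card : ℝ) := by
      have := (congrArg (Nat.cast : ℕ → ℝ) hcard)
      push_cast at this
      linarith
    exact_mod_cast this
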